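/- Let R = ℂ[x], H ∈ ℂ[x,z,t], and let D = D_H be the derivation D(f) = H_z·f_t - H_t·f_z on R[z,t]. Define Σ_n = Σ_{k=0}^{n} C(n,k)·{D^k(z), D^{n-k}(t)} where {f,g} = f_z·g_t - f_t·g_z. Then D(Σ_n) = Σ_{n+1} for all n ≥ 0. -/

import Mathlib

open MvPolynomial Finset

/-- The Poisson bracket on `ℂ[x][z,t] = ℂ[x,z,t]` with respect to `z` (index 1)
and `t` (index 2). -/
noncomputable def pb (f g : MvPolynomial (Fin 3) ℂ) : MvPolynomial (Fin 3) ℂ :=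
  pderiv 1 f * pderiv 2 g - pderiv 2 f * pderiv 1 g

/-- The derivation `D = D_H`, `D(f) = {H,f} = H_z f_t - H_t f_z`. -/
noncomputable def DH (H : MvPolynomial (Fin 3) ℂ) :
    MvPolynomial (Fin 3) ℂ → MvPolynomial (Fin 3) ℂ := fun f => pb H f

/-- `Σ_n = Σ_{k=0}^n C(n,k)·{D^k(z), D^{n-k}(t)}`. -/
noncomputable def Sig (H : MvPolynomial (Fin 3) ℂ) (n : ℕ) : MvPolynomial (Fin 3) ℂ :=
  ∑ k ∈ range (n + 1), (n.choose k) •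
    pb ((DH H)^[k] (X 1)) ((DH H)^[n - k] (X 2))

/-- Second partial derivatives commute. -/
lemma pderiv_comm' (i j : Fin 3) (f : MvPolynomial (Fin 3) ℂ) :
    pderiv i (pderiv j f) = pderiv j (pderiv i f) := by
  induction f using MvPolynomial.induction_on with
  | C a => simp
  | add p q hp hq => simp [hp, hq]
  | mul_X p k hp =>
    rcases eq_or_ne k i with rfl | hki <;> rcases eq_or_ne k j with rfl | hkj <;>
      simp [pderiv_mul, hp, pderiv_X_self, pderiv_X_of_ne, *] <;> ring

/-- The Jacobi identity in the form: `D_H` is a derivation of the Poisson bracket. -/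
lemma jacobi (H f g : MvPolynomial (Fin 3) ℂ) :
    DH H (pb f g) = pb (DH H f) g + pb f (DH H g) := by
  simp only [DH, pb, map_sub, map_add, pderiv_mul,
    pderiv_comm' 1 2, mul_sub, sub_mul, mul_add, add_mul]
  ring

/-- `D(Σ_n) = Σ_{n+1}` for all `n ≥ 0`. -/
theorem DH_Sig (H : MvPolynomial (Fin 3) ℂ) (n : ℕ) :
    DH H (Sig H n) = Sig H (n + 1) := by
  have hadd : ∀ f g, DH H (f + g) = DH H f + DH H g := by
    intro f g; simp only [DH, pb, map_add]; ring
  have hsmul : ∀ (m : ℕ) f, DH H (m • f) = m • DH H f := by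
    intro m f
    simp only [DH, pb, map_nsmul, smul_sub, mul_smul_comm]
  set d : MvPolynomial (Fin 3) ℂ →+ MvPolynomial (Fin 3) ℂ :=
    AddMonoidHom.mk' (DH H) hadd with hd
  have hDd : DH H = d := rfl
  set G : ℕ → MvPolynomial (Fin 3) ℂ :=
    fun k => pb ((DH H)^[k] (X 1)) ((DH H)^[n + 1 - k] (X 2)) with hG
  calc DH H (Sig H n)
      = ∑ k ∈ range (n + 1), (n.choose k) • (G (k + 1) + G k) := by
        rw [Sig, hDd, map_sum]
        refine Finset.sum_congr rfl fun k hk => ?_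
        rw [← hDd, hsmul, jacobi]
        have hk' : k ≤ n := Nat.lt_succ_iff.mp (mem_range.mp hk)
        have h1 : (DH H)^[k + 1] (X 1) = DH H ((DH H)^[k] (X 1)) :=
          Function.iterate_succ_apply' _ _ _
        have h2 : (DH H)^[n - k + 1] (X 2) = DH H ((DH H)^[n - k] (X 2)) :=
          Function.iterate_succ_apply' _ _ _
        have e1 : n + 1 - (k + 1) = n - k := by omega
        have e2 : n + 1 - k = n - k + 1 := by omega
        simp only [hG, e1, e2, h1, h2]
    _ = (∑ k ∈ range (n + 1), (n.choose k) • G (k + 1))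
        + ∑ k ∈ range (n + 1), (n.choose k) • G k := by
        simp [smul_add, Finset.sum_add_distrib]
    _ = ∑ k ∈ range (n + 2), ((n + 1).choose k) • G k := by
        rw [Finset.sum_range_succ (fun k => (n.choose k) • G (k + 1)) n,
          Finset.sum_range_succ' (fun k => (n.choose k) • G k) n,
          Finset.sum_range_succ' (fun k => ((n + 1).choose k) • G k) (n + 1),
          Finset.sum_range_succ (fun k => ((n + 1).choose (k + 1)) • G (k + 1)) n]
        simp only [Nat.choose_succ_succ, add_smul, Finset.sum_add_distrib,
          Nat.choose_zero_right, Nat.choose_self, one_smul, Nat.choose_succ_self,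
          zero_smul, add_zero]
        abel
    _ = Sig H (n + 1) := rfl
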